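/- arXiv:2212.08295 — 2 statements merged into one kernel-verified Lean document; each statement's English description precedes it below -/
import Mathlib

section
/- Let A be a subalgebra of C_c(W) that is dense with respect to the strict inductive limit topology, and let μ, ν be distinct Radon measures on W. Then there exists g ∈ A such that ∫ g dμ ≠ ∫ g dν. -/
/-! Setup: the birth-death plane, the space `C_c(W)` of compactly supported continuous
functions, the strict inductive limit (LF) topology on it, and Radon measures on `W`. -/

noncomputable section

open MeasureTheory Topology Filter Set Function
open scoped ENNReal

/-- The ambient plane `ℝ²`. -/
abbrev P2 : Type := ℝ × ℝ

/-- The birth-death plane `W = {(b,d) : b < d}`. -/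
def Wbd : Set P2 := {p | p.1 < p.2}

/-- `C_c(W)` as a submodule of `P2 → ℝ`: continuous, compactly supported functions with
(closed) support contained in the open set `W`, extended by zero to the plane. -/
def CcW : Submodule ℝ (P2 → ℝ) where
  carrier := {f | Continuous f ∧ HasCompactSupport f ∧ tsupport f ⊆ Wbd}
  zero_mem' := by
    refine ⟨continuous_zero, ?_, ?_⟩ <;>
      simp [HasCompactSupport, tsupport_eq_empty_iff.mpr rfl]
  add_mem' := by
    rintro f g ⟨hfc, hfs, hfW⟩ ⟨hgc, hgs, hgW⟩
    exact ⟨hfc.add hgc, hfs.add hgs, (tsupport_add f g).trans (union_subset hfW hgW)⟩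
  smul_mem' := by
    rintro c f ⟨hfc, hfs, hfW⟩
    refine ⟨hfc.const_smul c, ?_, ?_⟩
    · exact hfs.mono (support_const_smul_subset c f)
    · exact (closure_mono (support_const_smul_subset c f)).trans hfW

/-- The topology of uniform (sup-norm) convergence on the subspace
`C_c(K) = {f ∈ C_c(W) : supp f ⊆ K}`. -/
def supNormTop (K : Set P2) : TopologicalSpace {g : ↥CcW // tsupport (g : P2 → ℝ) ⊆ K} :=
  TopologicalSpace.induced (fun g => UniformFun.ofFun (g.1 : P2 → ℝ)) inferInstance

/-- `t` is a locally convex (vector space) topology on `C_c(W)`. -/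
def IsLocallyConvexTop (t : TopologicalSpace ↥CcW) : Prop :=
  @IsTopologicalAddGroup ↥CcW t _ ∧ @ContinuousSMul ℝ ↥CcW _ _ t ∧
    @LocallyConvexSpace ℝ ↥CcW _ _ _ _ t

/-- The strict inductive limit topology on `C_c(W)`: the finest locally convex topology
making every inclusion `C_c(K) ↪ C_c(W)`, `K ⊆ W` compact, continuous (recall that in
the lattice of topologies on a type, `≤` means finer, so the finest such topology is the
infimum). -/
def lfTopology : TopologicalSpace ↥CcW :=
  sInf {t | IsLocallyConvexTop t ∧
    ∀ K : Set P2, IsCompact K → K ⊆ Wbd →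
      @Continuous _ _ (supNormTop K) t (Subtype.val : {g : ↥CcW // tsupport (g : P2 → ℝ) ⊆ K} → ↥CcW)}

/-- `μ` is a Radon measure on the subspace `S`: it vanishes off `S`, is inner regular
(on relatively open sets) by compact sets, outer regular (by relatively open sets), and
finite on compact subsets of `S`. -/
def RadonOn {α : Type*} [TopologicalSpace α] [MeasurableSpace α] (S : Set α)
    (μ : Measure α) : Prop :=
  μ Sᶜ = 0 ∧
  (∀ U : Set α, IsOpen U → μ (U ∩ S) = ⨆ (K : Set α) (_ : K ⊆ U ∩ S) (_ : IsCompact K), μ K) ∧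
  (∀ E : Set α, E ⊆ S → MeasurableSet E →
    μ E = ⨅ (U : Set α) (_ : IsOpen U) (_ : E ⊆ U), μ (U ∩ S)) ∧
  (∀ K : Set α, K ⊆ S → IsCompact K → μ K < ⊤)

/-! ### Auxiliary lemmas -/

lemma isOpen_Wbd : IsOpen Wbd := isOpen_lt continuous_fst continuous_snd

lemma measurableSet_Wbd : MeasurableSet Wbd := isOpen_Wbd.measurableSet

lemma CcW_mem_iff {f : P2 → ℝ} :
    f ∈ CcW ↔ Continuous f ∧ HasCompactSupport f ∧ tsupport f ⊆ Wbd := Iff.rfl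

lemma CcW.integrable {μ : Measure P2} (hμ : RadonOn Wbd μ) {f : P2 → ℝ} (hf : f ∈ CcW) :
    Integrable f μ := by
  obtain ⟨hc, hcs, hW⟩ := CcW_mem_iff.mp hf
  obtain ⟨C, hC⟩ := hc.bounded_above_of_compact_support hcs
  have hfin : μ (tsupport f) < ⊤ := hμ.2.2.2 _ hW hcs
  have : IntegrableOn f (tsupport f) μ :=
    ⟨hc.aestronglyMeasurable.restrict,
      HasFiniteIntegral.restrict_of_bounded (C := C) hfin (ae_of_all _ hC)⟩
  exact (integrableOn_iff_integrable_of_support_subset (subset_tsupport f)).mp this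

/-- Urysohn-type bump: for `K` compact inside an open `U`, a continuous `[0,1]`-valued
function with compact support inside `U` which is `1` on `K`. -/
lemma exists_bump {K U : Set P2} (hK : IsCompact K) (hU : IsOpen U) (hKU : K ⊆ U) :
    ∃ f : P2 → ℝ, Continuous f ∧ HasCompactSupport f ∧ tsupport f ⊆ U ∧
      EqOn f 1 K ∧ ∀ x, f x ∈ Icc (0 : ℝ) 1 := by
  obtain ⟨L, L_comp, L_closed, hKL, hLU⟩ := exists_compact_closed_between hK hU hKU
  have hclos : IsCompact (closure (interior L)) :=
    L_comp.of_isClosed_subset isClosed_closure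
      ((closure_mono interior_subset).trans L_closed.closure_eq.subset)
  obtain ⟨f, hsupp, hf1, hf01⟩ :=
    exists_tsupport_one_of_isOpen_isClosed isOpen_interior hclos hK.isClosed hKL
  refine ⟨f, f.continuous, ?_, hsupp.trans (interior_subset.trans hLU), hf1, hf01⟩
  exact L_comp.of_isClosed_subset (isClosed_tsupport _) (hsupp.trans interior_subset)

lemma measure_compact_le {μ ν : Measure P2} (hμ : RadonOn Wbd μ) (hν : RadonOn Wbd ν)
    (h : ∀ f : P2 → ℝ, f ∈ CcW → ∫ x, f x ∂μ = ∫ x, f x ∂ν)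
    {K : Set P2} (hKc : IsCompact K) (hKW : K ⊆ Wbd) : μ K ≤ ν K := by
  have hνK : ν K < ⊤ := hν.2.2.2 K hKW hKc
  refine ENNReal.le_of_forall_pos_le_add fun ε hε _ => ?_
  have hreg := hν.2.2.1 K hKW hKc.measurableSet
  have hlt : (⨅ (U : Set P2) (_ : IsOpen U) (_ : K ⊆ U), ν (U ∩ Wbd)) < ν K + ε := by
    rw [← hreg]
    exact ENNReal.lt_add_right hνK.ne (by exact_mod_cast hε.ne')
  simp only [iInf_lt_iff] at hlt
  obtain ⟨V, hVopen, hKV, hVlt⟩ := hlt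
  have hUopen : IsOpen (V ∩ Wbd) := hVopen.inter isOpen_Wbd
  have hKU : K ⊆ V ∩ Wbd := subset_inter hKV hKW
  obtain ⟨f, hfc, hfcs, hfsupp, hf1, hf01⟩ := exists_bump hKc hUopen hKU
  have hfCcW : f ∈ CcW := CcW_mem_iff.mpr ⟨hfc, hfcs, hfsupp.trans inter_subset_right⟩
  have f_nn_μ : 0 ≤ᵐ[μ] f := ae_of_all _ fun x => (hf01 x).1
  have f_nn_ν : 0 ≤ᵐ[ν] f := ae_of_all _ fun x => (hf01 x).1
  calc μ K = ∫⁻ _ in K, 1 ∂μ := (setLIntegral_one K).symm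
    _ ≤ ∫⁻ x in K, ENNReal.ofReal (f x) ∂μ := by
        refine setLIntegral_mono (ENNReal.measurable_ofReal.comp hfc.measurable) ?_
        intro x hx
        simp [hf1 hx]
    _ ≤ ∫⁻ x, ENNReal.ofReal (f x) ∂μ := setLIntegral_le_lintegral _ _
    _ = ENNReal.ofReal (∫ x, f x ∂μ) :=
        (ofReal_integral_eq_lintegral_ofReal (CcW.integrable hμ hfCcW) f_nn_μ).symm
    _ = ENNReal.ofReal (∫ x, f x ∂ν) := by rw [h f hfCcW]
    _ = ∫⁻ x, ENNReal.ofReal (f x) ∂ν :=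
        ofReal_integral_eq_lintegral_ofReal (CcW.integrable hν hfCcW) f_nn_ν
    _ ≤ ∫⁻ x, (V ∩ Wbd).indicator 1 x ∂ν := by
        refine lintegral_mono fun x => ?_
        by_cases hx : x ∈ V ∩ Wbd
        · simp only [indicator_of_mem hx, Pi.one_apply]
          simpa using ENNReal.ofReal_le_ofReal (hf01 x).2
        · have : f x = 0 := by
            by_contra hfx
            exact hx (hfsupp (subset_tsupport f hfx))
          simp [indicator_of_notMem hx, this]
    _ = ν (V ∩ Wbd) := lintegral_indicator_one hUopen.measurableSet
    _ ≤ ν K + ε := hVlt.le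

lemma measure_eq_of_forall_integral_eq (μ ν : Measure P2) (hμ : RadonOn Wbd μ)
    (hν : RadonOn Wbd ν)
    (h : ∀ f : P2 → ℝ, f ∈ CcW → ∫ x, f x ∂μ = ∫ x, f x ∂ν) : μ = ν := by
  have hK : ∀ K : Set P2, IsCompact K → K ⊆ Wbd → μ K = ν K := fun K hKc hKW =>
    le_antisymm (measure_compact_le hμ hν h hKc hKW)
      (measure_compact_le hν hμ (fun f hf => (h f hf).symm) hKc hKW)
  have hopen : ∀ U : Set P2, IsOpen U → μ (U ∩ Wbd) = ν (U ∩ Wbd) := by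
    intro U hU
    rw [hμ.2.1 U hU, hν.2.1 U hU]
    refine iSup_congr fun K => ?_
    by_cases h1 : K ⊆ U ∩ Wbd
    · by_cases h2 : IsCompact K
      · simp [h1, h2, hK K h2 (h1.trans inter_subset_right)]
      · simp [h2]
    · simp [h1]
  refine Measure.ext fun E hE => ?_
  have key : ∀ (ρ : Measure P2), RadonOn Wbd ρ → ρ E = ρ (E ∩ Wbd) := by
    intro ρ hρ
    refine le_antisymm ?_ (measure_mono inter_subset_left)
    calc ρ E = ρ ((E ∩ Wbd) ∪ (E \ Wbd)) := by rw [inter_union_diff]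
      _ ≤ ρ (E ∩ Wbd) + ρ (E \ Wbd) := measure_union_le _ _
      _ ≤ ρ (E ∩ Wbd) + ρ Wbdᶜ := by
          gcongr
          rw [diff_eq]
          exact inter_subset_right
      _ = ρ (E ∩ Wbd) := by rw [hρ.1, add_zero]
  rw [key μ hμ, key ν hν,
    hμ.2.2.1 (E ∩ Wbd) inter_subset_right (hE.inter measurableSet_Wbd),
    hν.2.2.1 (E ∩ Wbd) inter_subset_right (hE.inter measurableSet_Wbd)]
  refine iInf_congr fun U => ?_
  by_cases hU : IsOpen U
  · by_cases hEU : E ∩ Wbd ⊆ U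
    · simp [hU, hEU, hopen U hU]
    · simp [hEU]
  · simp [hU]

/-- If `A` is a subalgebra of `C_c(W)` that is dense for the strict
inductive limit topology, then `A` separates distinct Radon measures on `W`: there is
`g ∈ A` with `∫ g dμ ≠ ∫ g dν`. -/
theorem dense_subalgebra_separates_measures
    (A : NonUnitalSubalgebra ℝ (P2 → ℝ)) (hAsub : (A : Set (P2 → ℝ)) ⊆ (CcW : Set (P2 → ℝ)))
    (hdense : @Dense ↥CcW lfTopology {g : ↥CcW | (g : P2 → ℝ) ∈ A})
    (μ ν : Measure P2) (hμ : RadonOn Wbd μ) (hν : RadonOn Wbd ν) (hne : μ ≠ ν) :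
    ∃ g : P2 → ℝ, g ∈ A ∧ ∫ x, g x ∂μ ≠ ∫ x, g x ∂ν := by
  by_contra hcon
  push_neg at hcon
  refine hne (measure_eq_of_forall_integral_eq μ ν hμ hν ?_)
  intro f hf
  have int_μ : ∀ g : ↥CcW, Integrable (g : P2 → ℝ) μ := fun g => CcW.integrable hμ g.2
  have int_ν : ∀ g : ↥CcW, Integrable (g : P2 → ℝ) ν := fun g => CcW.integrable hν g.2
  -- The linear functional `Λ g = ∫ g dμ - ∫ g dν`.
  let Λ : ↥CcW →ₗ[ℝ] ℝ :=
    { toFun := fun g => ∫ x, (g : P2 → ℝ) x ∂μ - ∫ x, (g : P2 → ℝ) x ∂ν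
      map_add' := by
        intro g h
        have h1 : ∫ x, ((g + h : ↥CcW) : P2 → ℝ) x ∂μ
            = ∫ x, (g : P2 → ℝ) x ∂μ + ∫ x, (h : P2 → ℝ) x ∂μ := by
          simp only [Submodule.coe_add, Pi.add_apply]
          exact integral_add (int_μ g) (int_μ h)
        have h2 : ∫ x, ((g + h : ↥CcW) : P2 → ℝ) x ∂ν
            = ∫ x, (g : P2 → ℝ) x ∂ν + ∫ x, (h : P2 → ℝ) x ∂ν := by
          simp only [Submodule.coe_add, Pi.add_apply]
          exact integral_add (int_ν g) (int_ν h)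
        rw [h1, h2]; ring
      map_smul' := by
        intro c g
        simp only [Submodule.coe_smul, Pi.smul_apply]
        rw [integral_smul, integral_smul]
        simp only [smul_eq_mul, RingHom.id_apply]
        ring }
  have hΛ_apply : ∀ g : ↥CcW, Λ g = ∫ x, (g : P2 → ℝ) x ∂μ - ∫ x, (g : P2 → ℝ) x ∂ν :=
    fun g => rfl
  -- The topology on `C_c(W)` induced by `Λ` belongs to the family defining `lfTopology`.
  have hmem : (TopologicalSpace.induced (⇑Λ) inferInstance) ∈
      {t | IsLocallyConvexTop t ∧
        ∀ K : Set P2, IsCompact K → K ⊆ Wbd →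
          @Continuous _ _ (supNormTop K) t
            (Subtype.val : {g : ↥CcW // tsupport (g : P2 → ℝ) ⊆ K} → ↥CcW)} := by
    constructor
    · refine ⟨topologicalAddGroup_induced Λ, continuousSMul_induced Λ, ?_⟩
      letI : TopologicalSpace ↥CcW := TopologicalSpace.induced (⇑Λ) inferInstance
      haveI : IsTopologicalAddGroup ↥CcW := topologicalAddGroup_induced Λ
      refine LocallyConvexSpace.ofBasisZero ℝ _ (fun ε : ℝ => ⇑Λ ⁻¹' Metric.ball 0 ε)
        (fun ε : ℝ => 0 < ε) ?_ ?_
      · have hn : (𝓝 (0 : ↥CcW)) = comap (⇑Λ) (𝓝 (Λ 0)) := nhds_induced (⇑Λ) 0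
        rw [hn, map_zero]
        exact Metric.nhds_basis_ball.comap (⇑Λ)
      · exact fun ε _ => (convex_ball (0 : ℝ) ε).linear_preimage Λ
    · intro K hKc hKW
      letI : TopologicalSpace {g : ↥CcW // tsupport (g : P2 → ℝ) ⊆ K} := supNormTop K
      have hμK : μ K < ⊤ := hμ.2.2.2 K hKW hKc
      have hνK : ν K < ⊤ := hν.2.2.2 K hKW hKc
      rw [continuous_induced_rng]
      rw [continuous_iff_continuousAt]
      intro g₀
      have hnhds : (𝓝 g₀) = comap
          (fun g : {g : ↥CcW // tsupport (g : P2 → ℝ) ⊆ K} => UniformFun.ofFun (g.1 : P2 → ℝ))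
          (𝓝 (UniformFun.ofFun (g₀.1 : P2 → ℝ))) :=
        nhds_induced
          (fun g : {g : ↥CcW // tsupport (g : P2 → ℝ) ⊆ K} => UniformFun.ofFun (g.1 : P2 → ℝ)) g₀
      show Tendsto (⇑Λ ∘ Subtype.val) (𝓝 g₀) (𝓝 ((⇑Λ ∘ Subtype.val) g₀))
      rw [hnhds, Metric.tendsto_nhds]
      intro ε hε
      set Cμ := (μ K).toReal with hCμ
      set Cν := (ν K).toReal with hCν
      have hCμ0 : 0 ≤ Cμ := ENNReal.toReal_nonneg
      have hCν0 : 0 ≤ Cν := ENNReal.toReal_nonneg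
      set δ := ε / (Cμ + Cν + 1) with hδ
      have hδpos : 0 < δ := div_pos hε (by positivity)
      have hbasis := ((UniformFun.hasBasis_nhds_of_basis P2 ℝ
          (UniformFun.ofFun (g₀.1 : P2 → ℝ)) Metric.uniformity_basis_dist).comap
          (fun g : {g : ↥CcW // tsupport (g : P2 → ℝ) ⊆ K} => UniformFun.ofFun (g.1 : P2 → ℝ)))
      rw [hbasis.eventually_iff]
      refine ⟨δ, hδpos, fun g hg => ?_⟩
      have hg' : ∀ x, dist ((g₀.1 : P2 → ℝ) x) ((g.1 : P2 → ℝ) x) < δ := hg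
      -- the difference function
      set φ : P2 → ℝ := fun x => (g.1 : P2 → ℝ) x - (g₀.1 : P2 → ℝ) x with hφ
      have hφ0 : ∀ x ∉ K, φ x = 0 := by
        intro x hx
        have h1 : (g.1 : P2 → ℝ) x = 0 := by
          by_contra hne'
          exact hx (g.2 (subset_tsupport _ hne'))
        have h2 : (g₀.1 : P2 → ℝ) x = 0 := by
          by_contra hne'
          exact hx (g₀.2 (subset_tsupport _ hne'))
        simp [hφ, h1, h2]
      have hφ_bound : ∀ x ∈ K, ‖φ x‖ ≤ δ := by
        intro x _
        rw [hφ]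
        simp only [Real.norm_eq_abs]
        rw [abs_sub_comm, ← Real.dist_eq]
        exact (hg' x).le
      have hint : ∀ (ρ : Measure P2), RadonOn Wbd ρ → ρ K < ⊤ →
          |∫ x, φ x ∂ρ| ≤ δ * (ρ K).toReal := by
        intro ρ hρ hρK
        rw [← Real.norm_eq_abs, ← setIntegral_eq_integral_of_forall_compl_eq_zero hφ0]
        exact norm_setIntegral_le_of_norm_le_const hρK hφ_bound
      have hφμ : ∫ x, φ x ∂μ = ∫ x, (g.1 : P2 → ℝ) x ∂μ - ∫ x, (g₀.1 : P2 → ℝ) x ∂μ :=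
        integral_sub (int_μ g.1) (int_μ g₀.1)
      have hφν : ∫ x, φ x ∂ν = ∫ x, (g.1 : P2 → ℝ) x ∂ν - ∫ x, (g₀.1 : P2 → ℝ) x ∂ν :=
        integral_sub (int_ν g.1) (int_ν g₀.1)
      have hdiff : (⇑Λ ∘ Subtype.val) g - (⇑Λ ∘ Subtype.val) g₀
          = ∫ x, φ x ∂μ - ∫ x, φ x ∂ν := by
        simp only [comp_apply, hΛ_apply, hφμ, hφν]
        ring
      rw [Real.dist_eq, hdiff]
      calc |∫ x, φ x ∂μ - ∫ x, φ x ∂ν| ≤ |∫ x, φ x ∂μ| + |∫ x, φ x ∂ν| := abs_sub _ _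
        _ ≤ δ * Cμ + δ * Cν := add_le_add (hint μ hμ hμK) (hint ν hν hνK)
        _ = δ * (Cμ + Cν) := by ring
        _ < δ * (Cμ + Cν + 1) := by
            have := mul_lt_mul_of_pos_left (lt_add_one (Cμ + Cν)) hδpos
            linarith
        _ = ε := by
            rw [hδ]
            field_simp
  -- `Λ` is continuous for the LF topology.
  have hle : lfTopology ≤ TopologicalSpace.induced (⇑Λ) inferInstance := sInf_le hmem
  have hΛind : @Continuous _ _ (TopologicalSpace.induced (⇑Λ) inferInstance) _ (⇑Λ) :=
    continuous_induced_dom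
  have hΛlf : @Continuous _ _ lfTopology _ (⇑Λ) := continuous_le_dom hle hΛind
  -- `Λ` vanishes on the dense subset `A`, hence everywhere.
  have hker : {g : ↥CcW | (g : P2 → ℝ) ∈ A} ⊆ ⇑Λ ⁻¹' {0} := by
    intro g hg
    simp only [mem_preimage, mem_singleton_iff, hΛ_apply]
    rw [hcon _ hg]
    ring
  letI : TopologicalSpace ↥CcW := lfTopology
  have hclosed : IsClosed (⇑Λ ⁻¹' {0}) := IsClosed.preimage hΛlf isClosed_singleton
  have hsub : closure {g : ↥CcW | (g : P2 → ℝ) ∈ A} ⊆ ⇑Λ ⁻¹' {0} :=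
    closure_minimal hker hclosed
  have hzero : Λ ⟨f, hf⟩ = 0 := hsub (hdense ⟨f, hf⟩)
  rw [hΛ_apply] at hzero
  exact sub_eq_zero.mp hzero
end
end

section
/- If S ⊆ M_f^∞ is relatively compact in (M_f^∞, OT_∞), then S is off-diagonally uniformly tight: for all ε > 0 and δ > 0, there exists N ∈ ℕ such that sup{ μ(W_ε ∩ ((ℝ \ [−N, N]) × ℝ)) : μ ∈ S } < δ. -/
/-! Common setup: the birth-death plane, Radon measures, partial optimal transport. -/

noncomputable section

open MeasureTheory Topology Filter Set
open scoped ENNReal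

/-- The closure `W̄` of the birth-death plane. -/
def Wcl : Set P2 := closure Wbd

/-- The diagonal `Δ`. -/
def Diag : Set P2 := {p | p.1 = p.2}

/-- Distance from a point to the diagonal, `‖x - Δ‖`. -/
def distDiag (x : P2) : ℝ := Metric.infDist x Diag

/-- The pseudometric `d(x,y) = min(‖x-y‖, ‖x-Δ‖ + ‖y-Δ‖)` on `W̄`. -/
def dW (x y : P2) : ℝ := min (dist x y) (distDiag x + distDiag y)

/-- The support of a Borel measure: points all of whose neighborhoods have
positive measure. -/
def msupport {α : Type*} [TopologicalSpace α] [MeasurableSpace α] (μ : Measure α) : Set α :=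
  {x | ∀ U ∈ 𝓝 x, 0 < μ U}

/-- The set `M` of Radon measures on `W`. -/
def MRadon : Set (Measure P2) := {μ | RadonOn Wbd μ}

/-- `pers_∞(μ) = sup{‖x-Δ‖ : x ∈ spt μ}` (valued in `ℝ≥0∞`). -/
def persInf (μ : Measure P2) : ℝ≥0∞ := ⨆ x ∈ msupport μ, ENNReal.ofReal (distDiag x)

/-- The space `M^∞` of Radon measures on `W` with finite `∞`-persistence. -/
def MInf : Set (Measure P2) := {μ | RadonOn Wbd μ ∧ persInf μ < ⊤}

/-- A coupling (admissible transport plan) between `μ` and `ν`: a Radon measure on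
`W̄ × W̄` whose marginals restricted to Borel subsets of `W` are `μ` and `ν`. -/
def IsCoupling (π : Measure (P2 × P2)) (μ ν : Measure P2) : Prop :=
  RadonOn (Wcl ×ˢ Wcl) π ∧
  (∀ A : Set P2, A ⊆ Wbd → MeasurableSet A → π (A ×ˢ Wcl) = μ A) ∧
  (∀ B : Set P2, B ⊆ Wbd → MeasurableSet B → π (Wcl ×ˢ B) = ν B)

/-- The `∞`-cost of a transport plan: `sup {d(x,y) : (x,y) ∈ spt π}`. -/
def costInf (π : Measure (P2 × P2)) : ℝ≥0∞ :=
  ⨆ p ∈ msupport π, ENNReal.ofReal (dW p.1 p.2)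

/-- The partial `∞`-optimal transport distance. -/
def OT (μ ν : Measure P2) : ℝ≥0∞ :=
  ⨅ (π : Measure (P2 × P2)) (_ : IsCoupling π μ ν), costInf π

/-- `W_ε = {(x,y) : y - x > ε}`. -/
def Weps (ε : ℝ) : Set P2 := {p | p.2 - p.1 > ε}

/-- The space `M_f^∞` of off-diagonally finite measures. -/
def Mf : Set (Measure P2) := {μ | μ ∈ MInf ∧ ∀ ε : ℝ, 0 < ε → μ (Weps ε) < ⊤}

/-- The space `M_fin^∞` of finite measures in `M^∞`. -/
def Mfin : Set (Measure P2) := {μ | μ ∈ MInf ∧ μ Wbd < ⊤}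

/-- `f ∈ C_c(W)`: a continuous function, compactly supported, with support contained
in the open set `W` (extended by zero to the plane). -/
def IsCcW (f : P2 → ℝ) : Prop :=
  Continuous f ∧ HasCompactSupport f ∧ tsupport f ⊆ Wbd

/-- Convergence of a sequence of measures to `μ` in the distance `OT_∞`. -/
def OTConv (u : ℕ → Measure P2) (μ : Measure P2) : Prop :=
  Tendsto (fun n => OT (u n) μ) atTop (𝓝 0)

/-- `S` is relatively compact in `(M_f^∞, OT_∞)` (sequential formulation, equivalent to
compactness of the closure in a metric space): every sequence in `S` has a subsequence
converging in `OT_∞` to some element of `M_f^∞`. -/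
def RelCompactInMf (S : Set (Measure P2)) : Prop :=
  ∀ u : ℕ → Measure P2, (∀ n, u n ∈ S) →
    ∃ μ ∈ Mf, ∃ φ : ℕ → ℕ, StrictMono φ ∧ Tendsto (fun n => OT (u (φ n)) μ) atTop (𝓝 0)

/-! Auxiliary lemmas -/

lemma isOpen_compl_msupport {α : Type*} [TopologicalSpace α] [MeasurableSpace α]
    (μ : Measure α) : IsOpen (msupport μ)ᶜ := by
  rw [isOpen_iff_mem_nhds]
  intro x hx
  simp only [mem_compl_iff, msupport, mem_setOf_eq, not_forall] at hx
  obtain ⟨U, hU, hU0⟩ := hx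
  have h0 : μ U = 0 := by simpa using hU0
  filter_upwards [eventually_mem_nhds_iff.mpr hU] with y hy
  simp only [mem_compl_iff, msupport, mem_setOf_eq, not_forall]
  exact ⟨U, hy, by simp [h0]⟩

lemma radon_compl_msupport {α : Type*} [TopologicalSpace α] [MeasurableSpace α]
    {S : Set α} {μ : Measure α} (h : RadonOn S μ) : μ (msupport μ)ᶜ = 0 := by
  obtain ⟨hS, hinner, -, -⟩ := h
  have h1 : μ ((msupport μ)ᶜ ∩ S) = 0 := by
    rw [hinner _ (isOpen_compl_msupport μ)]
    refine le_antisymm (iSup_le fun K => iSup_le fun hK => iSup_le fun hKc => ?_) (zero_le)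
    -- each compact K inside the complement of the support is null
    have hcov : ∀ x ∈ K, ∃ U ∈ 𝓝 x, μ U = 0 := by
      intro x hx
      have := hK hx
      have hx' : x ∉ msupport μ := (mem_inter_iff _ _ _).mp this |>.1
      simp only [msupport, mem_setOf_eq, not_forall] at hx'
      obtain ⟨U, hU, hU0⟩ := hx'
      exact ⟨U, hU, by simpa using hU0⟩
    choose! U hU hU0 using hcov
    obtain ⟨t, ht, hcover⟩ := hKc.elim_nhds_subcover U (fun x hx => hU x hx)
    calc μ K ≤ μ (⋃ x ∈ t, U x) := measure_mono hcover
      _ ≤ ∑ x ∈ t, μ (U x) := measure_biUnion_finset_le t U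
      _ = 0 := Finset.sum_eq_zero fun x hx => hU0 x (ht x hx)
  refine le_antisymm ?_ (zero_le)
  calc μ (msupport μ)ᶜ ≤ μ ((msupport μ)ᶜ ∩ S) + μ ((msupport μ)ᶜ \ S) :=
        measure_le_inter_add_diff μ _ S
    _ ≤ 0 + μ Sᶜ :=
        add_le_add h1.le (measure_mono (diff_subset_compl _ _))
    _ = 0 := by simp [hS]

lemma Diag_nonempty : Diag.Nonempty := ⟨(0,0), rfl⟩

lemma distDiag_ge (x : P2) : (x.2 - x.1) / 2 ≤ distDiag x := by
  by_contra hc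
  push_neg at hc
  rw [distDiag, Metric.infDist_lt_iff Diag_nonempty] at hc
  obtain ⟨y, hy, hd⟩ := hc
  have ht : y.1 = y.2 := hy
  rw [Prod.dist_eq] at hd
  have h1 : |x.1 - y.1| < (x.2 - x.1) / 2 := lt_of_le_of_lt (le_max_left _ _) (by
    simpa [Real.dist_eq] using hd)
  have h2 : |x.2 - y.2| < (x.2 - x.1) / 2 := lt_of_le_of_lt (le_max_right _ _) (by
    simpa [Real.dist_eq] using hd)
  linarith [(abs_lt.mp h1).1, (abs_lt.mp h1).2, (abs_lt.mp h2).1, (abs_lt.mp h2).2]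

lemma distDiag_nonneg (x : P2) : 0 ≤ distDiag x := Metric.infDist_nonneg

/-- Key transport estimate: if `OT ν μ < ofReal r` with `0 < r`, `4*r ≤ ε`, `r ≤ 1`, then
the `ν`-mass of the far region is at most the `μ`-mass of a slightly enlarged far region. -/
lemma transport_estimate {ν μ : Measure P2} {ε r : ℝ} (hr : 0 < r) (hrε : 4 * r ≤ ε)
    (hr1 : r ≤ 1) (N : ℕ) (hOT : OT ν μ < ENNReal.ofReal r) :
    ν (Weps ε ∩ ((Set.Icc (-(N : ℝ)) (N : ℝ))ᶜ ×ˢ Set.univ)) ≤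
      μ {p : P2 | ε / 2 < p.2 - p.1 ∧ (N : ℝ) - 1 < |p.1|} := by
  obtain ⟨π, hπ, hcost⟩ : ∃ π, IsCoupling π ν μ ∧ costInf π < ENNReal.ofReal r := by
    have := hOT
    rw [OT] at this
    simp only [iInf_lt_iff] at this
    obtain ⟨π, hπ, hc⟩ := this
    exact ⟨π, hπ, hc⟩
  obtain ⟨hrad, hmarg1, hmarg2⟩ := hπ
  set A : Set P2 := Weps ε ∩ ((Set.Icc (-(N : ℝ)) (N : ℝ))ᶜ ×ˢ Set.univ) with hA
  set B : Set P2 := {p : P2 | ε / 2 < p.2 - p.1 ∧ (N : ℝ) - 1 < |p.1|} with hB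
  have hAopen : IsOpen A := by
    apply IsOpen.inter
    · exact isOpen_lt continuous_const (continuous_snd.sub continuous_fst)
    · exact (isClosed_Icc.isOpen_compl).prod isOpen_univ
  have hAW : A ⊆ Wbd := by
    rintro p ⟨hp, -⟩
    have h : ε < p.2 - p.1 := hp
    show p.1 < p.2
    linarith
  have hBopen : IsOpen B := by
    apply IsOpen.inter
    · exact isOpen_lt continuous_const (continuous_snd.sub continuous_fst)
    · exact isOpen_lt continuous_const (continuous_abs.comp continuous_fst)
  have hBW : B ⊆ Wbd := by
    rintro p ⟨hp, -⟩
    show p.1 < p.2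
    linarith
  -- the key inclusion on the support
  have hincl : (A ×ˢ Wcl) ∩ msupport π ⊆ Wcl ×ˢ B := by
    rintro ⟨x, y⟩ ⟨⟨hxA, hyW⟩, hsupp⟩
    have hdW : dW x y < r := by
      have hle : ENNReal.ofReal (dW x y) ≤ costInf π := by
        have := le_iSup₂ (f := fun p (_ : p ∈ msupport π) => ENNReal.ofReal (dW p.1 p.2))
          (x, y) hsupp
        exact this
      by_contra hge
      push_neg at hge
      exact absurd (hle.trans_lt hcost) (not_lt.mpr (ENNReal.ofReal_le_ofReal hge))
    have hxε : ε < x.2 - x.1 := hxA.1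
    have hxfar : (N : ℝ) < |x.1| := by
      have := hxA.2.1
      simp only [mem_compl_iff, mem_Icc, not_and_or, not_le] at this
      rcases this with h | h
      · rw [abs_of_neg (by linarith [Nat.cast_nonneg (α := ℝ) N])]; linarith
      · rw [abs_of_pos (by linarith [Nat.cast_nonneg (α := ℝ) N])]; linarith
    have hdd : r < distDiag x + distDiag y := by
      have h1 : (x.2 - x.1) / 2 ≤ distDiag x := distDiag_ge x
      have h2 : 0 ≤ distDiag y := distDiag_nonneg y
      linarith
    have hdist : dist x y < r := by
      rcases min_cases (dist x y) (distDiag x + distDiag y) with ⟨he, -⟩ | ⟨he, hle⟩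
      · rw [dW, he] at hdW; exact hdW
      · rw [dW, he] at hdW; linarith
    rw [Prod.dist_eq] at hdist
    have hd1 : |x.1 - y.1| < r := lt_of_le_of_lt (le_max_left _ _) (by
      simpa [Real.dist_eq] using hdist)
    have hd2 : |x.2 - y.2| < r := lt_of_le_of_lt (le_max_right _ _) (by
      simpa [Real.dist_eq] using hdist)
    refine ⟨subset_closure (hAW hxA), ?_, ?_⟩
    · have := abs_lt.mp hd1
      have := abs_lt.mp hd2
      simp only [hB]
      linarith [(abs_lt.mp hd1).1, (abs_lt.mp hd1).2, (abs_lt.mp hd2).1, (abs_lt.mp hd2).2]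
    · have : |x.1| - |y.1| ≤ |x.1 - y.1| := abs_sub_abs_le_abs_sub _ _
      linarith
  have hnull : π (msupport π)ᶜ = 0 := radon_compl_msupport hrad
  calc ν A = π (A ×ˢ Wcl) := (hmarg1 A hAW hAopen.measurableSet).symm
    _ ≤ π ((A ×ˢ Wcl) ∩ msupport π) + π ((A ×ˢ Wcl) \ msupport π) :=
        measure_le_inter_add_diff π _ _
    _ ≤ π (Wcl ×ˢ B) + π (msupport π)ᶜ :=
        add_le_add (measure_mono hincl) (measure_mono (diff_subset_compl _ _))
    _ = π (Wcl ×ˢ B) := by rw [hnull, add_zero]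
    _ = μ B := hmarg2 B hBW hBopen.measurableSet

/-- A relatively compact subset of `(M_f^∞, OT_∞)` is off-diagonally
uniformly tight: for all `ε, δ > 0` there is `N ∈ ℕ` with
`sup { μ(W_ε ∩ ((ℝ \ [-N,N]) × ℝ)) : μ ∈ S } < δ`. -/
theorem relCompact_off_diagonally_uniformly_tight
    (S : Set (Measure P2)) (hS : S ⊆ Mf) (hrc : RelCompactInMf S) :
    ∀ ε : ℝ, 0 < ε → ∀ δ : ℝ, 0 < δ → ∃ N : ℕ,
      (⨆ μ ∈ S, μ (Weps ε ∩ ((Set.Icc (-(N : ℝ)) (N : ℝ))ᶜ ×ˢ Set.univ)))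
        < ENNReal.ofReal δ := by
  intro ε hε δ hδ
  by_contra hcon
  push_neg at hcon
  -- for each N pick μ_N ∈ S with big far mass
  have hpick : ∀ N : ℕ, ∃ μ ∈ S,
      ENNReal.ofReal (δ / 2) < μ (Weps ε ∩ ((Set.Icc (-(N : ℝ)) (N : ℝ))ᶜ ×ˢ Set.univ)) := by
    intro N
    have h1 : ENNReal.ofReal (δ / 2) <
        ⨆ μ ∈ S, μ (Weps ε ∩ ((Set.Icc (-(N : ℝ)) (N : ℝ))ᶜ ×ˢ Set.univ)) :=
      lt_of_lt_of_le (ENNReal.ofReal_lt_ofReal_iff hδ |>.mpr (by linarith)) (hcon N)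
    rw [lt_iSup_iff] at h1
    obtain ⟨μ, hμ⟩ := h1
    rw [lt_iSup_iff] at hμ
    obtain ⟨hμS, h⟩ := hμ
    exact ⟨μ, hμS, h⟩
  choose u huS hubig using hpick
  obtain ⟨μ, hμ, φ, hφ, hOT⟩ := hrc u huS
  -- the limit measure has vanishing far mass
  set B : ℕ → Set P2 := fun N => {p : P2 | ε / 2 < p.2 - p.1 ∧ (N : ℝ) - 1 < |p.1|} with hBdef
  have hBmeas : ∀ N, MeasurableSet (B N) := by
    intro N
    refine (IsOpen.inter ?_ ?_).measurableSet
    · exact isOpen_lt continuous_const (continuous_snd.sub continuous_fst)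
    · exact isOpen_lt continuous_const (continuous_abs.comp continuous_fst)
  have hBanti : Antitone B := by
    intro m n hmn p hp
    refine ⟨hp.1, lt_of_le_of_lt (by simp; exact_mod_cast hmn) hp.2⟩
  have hBsub : ∀ N, B N ⊆ Weps (ε / 2) := fun N p hp => hp.1
  have hBfin : μ (B 0) ≠ ⊤ := by
    have := hμ.2 (ε / 2) (by linarith)
    exact ne_top_of_le_ne_top this.ne (measure_mono (hBsub 0))
  have hBempty : ⋂ N, B N = ∅ := by
    ext p
    simp only [mem_iInter, mem_empty_iff_false, iff_false, not_forall]
    obtain ⟨N, hN⟩ := exists_nat_gt (|p.1| + 1)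
    exact ⟨N, fun hp => absurd hp.2 (by push_neg; linarith)⟩
  have htend : Tendsto (fun N => μ (B N)) atTop (𝓝 0) := by
    have := tendsto_measure_iInter_atTop (μ := μ) (s := B)
      (fun n => (hBmeas n).nullMeasurableSet) hBanti ⟨0, hBfin⟩
    rw [hBempty] at this
    simpa [Function.comp_def] using this
  -- choose M with μ (B M) < δ/2
  have hhalf : (0 : ℝ≥0∞) < ENNReal.ofReal (δ / 2) := ENNReal.ofReal_pos.mpr (by linarith)
  obtain ⟨M, hM⟩ := (htend.eventually (gt_mem_nhds hhalf)).exists_forall_of_atTop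
  -- choose the transport radius
  set r : ℝ := min (ε / 4) 1 with hrdef
  have hr : 0 < r := lt_min (by linarith) one_pos
  have hrε : 4 * r ≤ ε := by
    have := min_le_left (ε / 4) 1
    nlinarith [min_le_left (ε / 4) 1]
  have hr1 : r ≤ 1 := min_le_right _ _
  have hrpos : (0 : ℝ≥0∞) < ENNReal.ofReal r := ENNReal.ofReal_pos.mpr hr
  obtain ⟨n0, hn0⟩ := (hOT.eventually (gt_mem_nhds hrpos)).exists_forall_of_atTop
  -- pick n with φ n ≥ M and OT small
  set n : ℕ := max M n0 with hndef
  have hφn : M ≤ φ n := le_trans (le_max_left _ _) (hφ.le_apply)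
  have hOTn : OT (u (φ n)) μ < ENNReal.ofReal r := hn0 n (le_max_right _ _)
  have hest := transport_estimate hr hrε hr1 (φ n) hOTn
  have hmono : μ (B (φ n)) ≤ μ (B M) := measure_mono (hBanti hφn)
  have : ENNReal.ofReal (δ / 2) < ENNReal.ofReal (δ / 2) :=
    lt_of_lt_of_le (hubig (φ n)) (le_trans hest (le_trans hmono (le_of_lt (hM M le_rfl))))
  exact lt_irrefl _ this
end
end
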